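/- For every fixed real x > 0, the function y ↦ Φ(x, y) is monotone increasing on (1, ∞): for all 1 < y₁ ≤ y₂ one has Φ(x, y₁) ≤ Φ(x, y₂). -/

import Mathlib

/-- The function `𝓕(x, y) = (√(x(1+√y)² + 1) − √(x(1−√y)² + 1))²`. -/
noncomputable def Fcal (x y : ℝ) : ℝ :=
  (Real.sqrt (x * (1 + Real.sqrt y) ^ 2 + 1) - Real.sqrt (x * (1 - Real.sqrt y) ^ 2 + 1)) ^ 2

/-- The Verdú–Shamai asymptotic per-antenna MIMO capacity formula
`Φ(x, y) = y·log₂(1 + x − 𝓕(x,y)/4) + log₂(1 + x·y − 𝓕(x,y)/4) − (log₂ e)·𝓕(x,y)/(4x)`. -/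
noncomputable def Phi (x y : ℝ) : ℝ :=
  y * Real.logb 2 (1 + x - Fcal x y / 4) + Real.logb 2 (1 + x * y - Fcal x y / 4)
    - Real.logb 2 (Real.exp 1) * Fcal x y / (4 * x)

noncomputable def Gf (x y : ℝ) : ℝ := Real.sqrt (x^2*(1-y)^2 + 2*x*(1+y) + 1)

lemma g_pos {x : ℝ} (hx : 0 < x) (y : ℝ) : 0 < x^2*(1-y)^2 + 2*x*(1+y) + 1 := by
  nlinarith [sq_nonneg (1 - x + x*y)]

lemma Gf_sq {x : ℝ} (hx : 0 < x) (y : ℝ) : (Gf x y)^2 = x^2*(1-y)^2 + 2*x*(1+y) + 1 :=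
  Real.sq_sqrt (g_pos hx y).le

lemma abs_lt_Gf {x : ℝ} (hx : 0 < x) (y : ℝ) : |1 - x + x*y| < Gf x y := by
  have h : (1 - x + x*y)^2 < x^2*(1-y)^2 + 2*x*(1+y) + 1 := by nlinarith
  calc |1 - x + x*y| = Real.sqrt ((1 - x + x*y)^2) := (Real.sqrt_sq_eq_abs _).symm
    _ < Gf x y := Real.sqrt_lt_sqrt (sq_nonneg _) h

lemma q_pos {x : ℝ} (hx : 0 < x) (y : ℝ) : 0 < (1 - x + x*y + Gf x y)/2 := by
  have h := abs_lt_Gf hx y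
  have h2 := neg_abs_le (1 - x + x*y)
  linarith

lemma Fcal_eq {x y : ℝ} (hx : 0 ≤ x) (hy : 0 ≤ y) :
    Fcal x y = 2*(x*(1+y)+1) - 2 * Gf x y := by
  have hs : Real.sqrt y ^ 2 = y := Real.sq_sqrt hy
  have ha : (0:ℝ) ≤ x * (1 + Real.sqrt y) ^ 2 + 1 := by positivity
  have hb : (0:ℝ) ≤ x * (1 - Real.sqrt y) ^ 2 + 1 := by positivity
  unfold Fcal Gf
  rw [sub_sq, Real.sq_sqrt ha, Real.sq_sqrt hb, mul_assoc, ← Real.sqrt_mul ha]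
  have h : (x * (1 + Real.sqrt y) ^ 2 + 1) * (x * (1 - Real.sqrt y) ^ 2 + 1)
      = x^2*(1-y)^2 + 2*x*(1+y) + 1 := by
    linear_combination (x^2*(Real.sqrt y^2 + y - 2) + 2*x) * hs
  rw [h]
  linear_combination 2*x*hs

lemma p_gt_one {x : ℝ} (hx : 0 < x) (y : ℝ) : 1 < (1 + x - x*y + Gf x y)/2 := by
  have h := abs_lt_Gf hx y
  have h2 := le_abs_self (1 - x + x*y)
  linarith

lemma Phi_eq {x y : ℝ} (hx : 0 < x) (hy : 0 ≤ y) :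
    Phi x y = y * Real.logb 2 ((1 + x - x*y + Gf x y)/2)
      + Real.logb 2 ((1 - x + x*y + Gf x y)/2)
      - Real.logb 2 (Real.exp 1) * ((x*(1+y) + 1 - Gf x y)/(2*x)) := by
  unfold Phi
  rw [Fcal_eq hx.le hy]
  rw [show 1 + x - (2*(x*(1+y)+1) - 2 * Gf x y)/4 = (1 + x - x*y + Gf x y)/2 by ring,
    show 1 + x*y - (2*(x*(1+y)+1) - 2 * Gf x y)/4 = (1 - x + x*y + Gf x y)/2 by ring]
  field_simp
  ring

lemma Psi_hasDeriv {x : ℝ} (hx : 0 < x) {y : ℝ} (_hy : 0 < y) :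
    HasDerivAt (fun t => t * Real.logb 2 ((1 + x - x*t + Gf x t)/2)
      + Real.logb 2 ((1 - x + x*t + Gf x t)/2)
      - Real.logb 2 (Real.exp 1) * ((x*(1+t) + 1 - Gf x t)/(2*x)))
      (Real.logb 2 ((1 + x - x*y + Gf x y)/2)) y := by
  have hgne : x^2*(1-y)^2 + 2*x*(1+y) + 1 ≠ 0 := (g_pos hx y).ne'
  have hGpos : 0 < Gf x y := Real.sqrt_pos.mpr (g_pos hx y)
  have hppos : (0:ℝ) < (1 + x - x*y + Gf x y)/2 := lt_trans one_pos (p_gt_one hx y)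
  have hqpos := q_pos hx y
  -- derivative of inner polynomial
  have hgd : HasDerivAt (fun t : ℝ => x^2*(1-t)^2 + 2*x*(1+t) + 1) (2*x*(1 - x + x*y)) y := by
    have h1 := (((hasDerivAt_id y).const_sub 1).pow 2).const_mul (x^2)
    have h2 := ((hasDerivAt_id y).const_add 1).const_mul (2*x)
    have h3 := (h1.add h2).add_const 1
    refine h3.congr_deriv ?_
    simp [id]
    ring
  have hGd : HasDerivAt (fun t : ℝ => Gf x t) (2*x*(1 - x + x*y) / (2 * Gf x y)) y :=
    hgd.sqrt hgne
  have hpd : HasDerivAt (fun t : ℝ => (1 + x - x*t + Gf x t)/2)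
      ((-x + 2*x*(1 - x + x*y) / (2 * Gf x y))/2) y := by
    have h1 : HasDerivAt (fun t : ℝ => 1 + x - x*t) (-x) y := by
      simpa using ((hasDerivAt_id y).const_mul x).const_sub (1+x)
    exact (h1.add hGd).div_const 2
  have hqd : HasDerivAt (fun t : ℝ => (1 - x + x*t + Gf x t)/2)
      ((x + 2*x*(1 - x + x*y) / (2 * Gf x y))/2) y := by
    have h1 : HasDerivAt (fun t : ℝ => 1 - x + x*t) x y := by
      simpa using ((hasDerivAt_id y).const_mul x).const_add (1-x)
    exact (h1.add hGd).div_const 2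
  have hrd : HasDerivAt (fun t : ℝ => (x*(1+t) + 1 - Gf x t)/(2*x))
      ((x - 2*x*(1 - x + x*y) / (2 * Gf x y))/(2*x)) y := by
    have h1 : HasDerivAt (fun t : ℝ => x*(1+t) + 1) x y := by
      simpa using (((hasDerivAt_id y).const_add 1).const_mul x).add_const 1
    exact (h1.sub hGd).div_const (2*x)
  have hlogp := (hpd.log hppos.ne').div_const (Real.log 2)
  have hlogq := (hqd.log hqpos.ne').div_const (Real.log 2)
  have hterm1 := (hasDerivAt_id y).mul hlogp
  have hterm3 := hrd.const_mul (Real.log (Real.exp 1) / Real.log 2)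
  have total := (hterm1.add hlogq).sub hterm3
  simp only [Real.logb]
  refine total.congr_deriv ?_
  rw [Real.log_exp]
  have hL : Real.log 2 ≠ 0 := (Real.log_pos one_lt_two).ne'
  have hpne : 1 + x - x*y + Gf x y ≠ 0 := by linarith [hppos]
  have hqne : 1 - x + x*y + Gf x y ≠ 0 := by linarith [hqpos]
  have hG2 := Gf_sq hx y
  simp only [id]
  field_simp [hpne, hqne, hGpos.ne', hx.ne']
  linear_combination (-(Gf x y) - (1 - x + x*y)) * hG2

theorem Phi_mono_snd (x : ℝ) (hx : 0 < x) :
    ∀ y₁ y₂ : ℝ, 1 < y₁ → y₁ ≤ y₂ → Phi x y₁ ≤ Phi x y₂ := by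
  intro y₁ y₂ hy1 hle
  have hder : ∀ y ∈ Set.Ici y₁, HasDerivAt (Phi x)
      (Real.logb 2 ((1 + x - x*y + Gf x y)/2)) y := by
    intro y hy
    have hy0 : (0:ℝ) < y := lt_trans one_pos (lt_of_lt_of_le hy1 hy)
    apply (Psi_hasDeriv hx hy0).congr_of_eventuallyEq
    filter_upwards [eventually_gt_nhds hy0] with t ht
    exact Phi_eq hx ht.le
  have hmono : MonotoneOn (Phi x) (Set.Ici y₁) := by
    apply monotoneOn_of_deriv_nonneg (convex_Ici y₁)
    · exact fun y hy => (hder y hy).differentiableAt.continuousAt.continuousWithinAt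
    · intro y hy
      rw [interior_Ici] at hy
      exact (hder y (Set.mem_Ici.mpr (le_of_lt hy))).differentiableAt.differentiableWithinAt
    · intro y hy
      rw [interior_Ici] at hy
      rw [(hder y (Set.mem_Ici.mpr (le_of_lt hy))).deriv]
      exact Real.logb_nonneg one_lt_two (p_gt_one hx y).le
  exact hmono Set.self_mem_Ici (Set.mem_Ici.mpr hle) hle
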